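/- In a convex quadrilateral xyzw in the plane, if the diagonal segments xz and yw are both strictly shorter than the side zw, then the interior angle at w is strictly less than the angle ∠wxz and the interior angle at z is strictly less than the angle ∠wyz. -/
import Mathlib


open EuclideanGeometry Metric Set

noncomputable section

abbrev E2 := EuclideanSpace ℝ (Fin 2)

/-- In a nondegenerate triangle, the angle opposite a shorter side is smaller. -/
lemma angle_lt_angle_of_dist_lt_aux (a b c : E2)
    (h : ¬ Collinear ℝ ({a, b, c} : Set E2))
    (hd : dist b c < dist a c) : ∠ b a c < ∠ a b c := by
  have hab : a ≠ b := by
    rintro rfl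
    exact h ((collinear_pair ℝ a c).subset (by intro p hp; simp at hp ⊢; tauto))
  have hac : a ≠ c := by
    rintro rfl
    exact h ((collinear_pair ℝ a b).subset (by intro p hp; simp at hp ⊢; tauto))
  have hbc : b ≠ c := by
    rintro rfl
    exact h ((collinear_pair ℝ a b).subset (by intro p hp; simp at hp ⊢; tauto))
  have hA : (0:ℝ) < dist b c := dist_pos.2 hbc
  have hB : (0:ℝ) < dist a c := dist_pos.2 hac
  have hC : (0:ℝ) < dist a b := dist_pos.2 hab
  -- strict triangle inequality: c is not between a and b
  have htri : dist a b < dist a c + dist c b := by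
    refine lt_of_le_of_ne (dist_triangle a c b) fun he => h ?_
    have : Wbtw ℝ a c b := dist_add_dist_eq_iff.1 he.symm
    exact this.collinear.subset (by intro p hp; simp at hp ⊢; tauto)
  -- law of cosines at a and at b
  have lawa := EuclideanGeometry.law_cos b a c
  have lawb := EuclideanGeometry.law_cos a b c
  have hcos : Real.cos (∠ a b c) < Real.cos (∠ b a c) := by
    rw [dist_comm c a, dist_comm b a] at lawa
    rw [dist_comm c b] at lawb
    have h1 : 0 < dist a c - dist b c := by linarith
    have h2 : 0 < dist b c + dist a c - dist a b := by
      rw [dist_comm c b] at htri; linarith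
    have h3 : 0 < dist b c + dist a c + dist a b := by positivity
    have key : 2 * dist a b * dist b c * dist a c *
        (Real.cos (∠ b a c) - Real.cos (∠ a b c)) =
        (dist a c - dist b c) * ((dist b c + dist a c) ^ 2 - dist a b ^ 2) := by
      linear_combination (dist b c) * lawa - dist a c * lawb
    nlinarith [mul_pos (mul_pos h1 h2) h3, mul_pos (mul_pos hC hA) hB, key]
  by_contra hle
  push_neg at hle
  exact absurd (Real.cos_le_cos_of_nonneg_of_le_pi (angle_nonneg a b c)
    (angle_le_pi b a c) hle) (not_le.2 hcos)

theorem quadrilateral_angle_lt_of_short_diagonals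
    (x y z w : E2)
    (hdiag : (openSegment ℝ x z ∩ openSegment ℝ y w).Nonempty)
    (h₁ : ¬ Collinear ℝ ({x, y, z} : Set E2))
    (h₂ : ¬ Collinear ℝ ({y, z, w} : Set E2))
    (h₃ : ¬ Collinear ℝ ({z, w, x} : Set E2))
    (h₄ : ¬ Collinear ℝ ({w, x, y} : Set E2))
    (hxz : dist x z < dist z w) (hyw : dist y w < dist z w) :
    ∠ z w x < ∠ w x z ∧ ∠ y z w < ∠ w y z := by
  constructor
  · have h₃' : ¬ Collinear ℝ ({w, x, z} : Set E2) := fun hc =>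
      h₃ (hc.subset (by intro p hp; simp at hp ⊢; tauto))
    have := angle_lt_angle_of_dist_lt_aux w x z h₃' (by rwa [dist_comm w z])
    rwa [EuclideanGeometry.angle_comm x w z] at this
  · have h₂' : ¬ Collinear ℝ ({z, y, w} : Set E2) := fun hc =>
      h₂ (hc.subset (by intro p hp; simp at hp ⊢; tauto))
    have := angle_lt_angle_of_dist_lt_aux z y w h₂' hyw
    rwa [EuclideanGeometry.angle_comm z y w] at this
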